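/- arXiv:1806.03408 — 6 statements merged into one kernel-verified Lean document; each statement's English description precedes it below -/
import Mathlib

section
/- Any element C of 𝔖_k fixed by the Sym(k)-action (σ·C)^{(ℓ)}_{i,j} = c^{(σ⁻¹ℓ)}_{σ⁻¹i, σ⁻¹j} for all σ is determined by real numbers x, y, a, b with x + (k−1)a = 1 and y + a + (k−2)b = 0, via c^{(ℓ)}_{i,j} = x if i = j = ℓ; y if i = j ≠ ℓ; a if exactly one of i, j equals ℓ; b if i ≠ j and neither equals ℓ. Conversely every such C is a fixed point. Hence the invariant space 𝔖_k^{fix} is a 2-dimensional affine subspace. -/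
open Finset Filter

/-- Membership in the affine set 𝔖ₖ. -/
def inSk (k : ℕ) (C : Fin k → Matrix (Fin k) (Fin k) ℝ) : Prop :=
  ∀ ℓ : Fin k,
    (∀ i : Fin k, i ≠ ℓ → ∑ j, C ℓ i j = 0) ∧
    (∀ j : Fin k, j ≠ ℓ → ∑ i, C ℓ i j = 0) ∧
    (∑ i, ∑ j, C ℓ i j = 1)

/-- A k-sample: nonempty subset of [k]×[k] with pairwise distinct second coordinates. -/
def IsSample {k : ℕ} (s : Finset (Fin k × Fin k)) : Prop :=
  s.Nonempty ∧ ∀ p ∈ s, ∀ q ∈ s, p ≠ q → p.2 ≠ q.2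

/-- g_s^{(ℓ)}(C) -/
def gPart {k : ℕ} (s : Finset (Fin k × Fin k)) (C : Fin k → Matrix (Fin k) (Fin k) ℝ)
    (ℓ : Fin k) : ℝ :=
  ∑ p ∈ s, C ℓ p.1 p.2

/-- g_s(C) -/
def gSample {k : ℕ} (s : Finset (Fin k × Fin k)) (C : Fin k → Matrix (Fin k) (Fin k) ℝ) : ℝ :=
  ∑ ℓ : Fin k, |gPart s C ℓ|

/-- g_{S_k}(C) : the maximum of g_s(C) over all k-samples s. -/
noncomputable def gMax (k : ℕ) (C : Fin k → Matrix (Fin k) (Fin k) ℝ) : ℝ :=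
  ⨆ s : {s : Finset (Fin k × Fin k) // IsSample s}, gSample s.1 C

/-- multiplicity of ℓ in the multiset of coordinates of elements of s -/
def mult {k : ℕ} (s : Finset (Fin k × Fin k)) (ℓ : Fin k) : ℕ :=
  (s.filter (fun p => p.1 = ℓ)).card + (s.filter (fun p => p.2 = ℓ)).card

/-- β(s): number of distinct indices among coordinates of s -/
def beta {k : ℕ} (s : Finset (Fin k × Fin k)) : ℕ :=
  (s.image Prod.fst ∪ s.image Prod.snd).card

/-- γ(s): number of diagonal elements of s -/
def gamma {k : ℕ} (s : Finset (Fin k × Fin k)) : ℕ :=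
  (s.filter (fun p => p.1 = p.2)).card

/-- the strong homogeneous flow C*_k -/
noncomputable def Cstar (k : ℕ) : Fin k → Matrix (Fin k) (Fin k) ℝ :=
  fun ℓ i j =>
    if i = ℓ ∧ j = ℓ then 2/(k:ℝ) - 1/(k:ℝ)^2
    else if i = ℓ ∨ j = ℓ then 1/(k:ℝ) - 1/(k:ℝ)^2
    else -1/(k:ℝ)^2

/-- the Sym(k)-invariant tuple with parameters x (i=j=ℓ), y (i=j≠ℓ),
a (exactly one of i,j equals ℓ), b (otherwise) -/
def Cfix (k : ℕ) (x y a b : ℝ) : Fin k → Matrix (Fin k) (Fin k) ℝ :=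
  fun ℓ i j =>
    if i = ℓ ∧ j = ℓ then x
    else if i = j then y
    else if i = ℓ ∨ j = ℓ then a
    else b

/-- The Sym(k)-action on tuples of matrices. -/
def permAct {k : ℕ} (σ : Equiv.Perm (Fin k)) (C : Fin k → Matrix (Fin k) (Fin k) ℝ) :
    Fin k → Matrix (Fin k) (Fin k) ℝ :=
  fun ℓ i j => C (σ⁻¹ ℓ) (σ⁻¹ i) (σ⁻¹ j)

/-- optimal value O_k -/
noncomputable def Ovalue (k : ℕ) : ℝ := sInf {y | ∃ C, inSk k C ∧ gMax k C = y}

lemma exists_perm_two {α : Type*} [DecidableEq α] {u v u' v' : α} (h : u ≠ v) (h' : u' ≠ v') :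
    ∃ σ : Equiv.Perm α, σ u = u' ∧ σ v = v' := by
  refine ⟨Equiv.swap (Equiv.swap u u' v) v' * Equiv.swap u u', ?_, ?_⟩
  · have h1 : u' ≠ Equiv.swap u u' v := by
      intro he
      apply h
      apply (Equiv.swap u u').injective
      rw [← he, Equiv.swap_apply_left]
    simp only [Equiv.Perm.mul_apply, Equiv.swap_apply_left]
    exact Equiv.swap_apply_of_ne_of_ne h1 h'
  · simp only [Equiv.Perm.mul_apply, Equiv.swap_apply_left]

lemma exists_perm_three {α : Type*} [DecidableEq α] {u v w u' v' w' : α}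
    (huv : u ≠ v) (huw : u ≠ w) (hvw : v ≠ w)
    (h'uv : u' ≠ v') (h'uw : u' ≠ w') (h'vw : v' ≠ w') :
    ∃ σ : Equiv.Perm α, σ u = u' ∧ σ v = v' ∧ σ w = w' := by
  obtain ⟨σ, h1, h2⟩ := exists_perm_two huv h'uv
  have hu : u' ≠ σ w := by
    intro he; apply huw; apply σ.injective; rw [h1, ← he]
  have hv : v' ≠ σ w := by
    intro he; apply hvw; apply σ.injective; rw [h2, ← he]
  refine ⟨Equiv.swap (σ w) w' * σ, ?_, ?_, ?_⟩
  · simp only [Equiv.Perm.mul_apply, h1]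
    exact Equiv.swap_apply_of_ne_of_ne hu h'uw
  · simp only [Equiv.Perm.mul_apply, h2]
    exact Equiv.swap_apply_of_ne_of_ne hv h'vw
  · simp only [Equiv.Perm.mul_apply, Equiv.swap_apply_left]

lemma sum_one_point {k : ℕ} {ℓ : Fin k} (u v : ℝ) (f : Fin k → ℝ)
    (hf : ∀ j, f j = if j = ℓ then u else v) :
    ∑ j, f j = u + ((k:ℝ) - 1) * v := by
  have : ∀ j, f j = (if j = ℓ then u - v else 0) + v := by
    intro j; rw [hf]; split_ifs <;> ring
  rw [Finset.sum_congr rfl fun j _ => this j]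
  rw [Finset.sum_add_distrib]
  simp [Finset.sum_ite_eq', Finset.sum_const, Finset.card_univ, nsmul_eq_mul]
  ring

lemma sum_two_point {k : ℕ} {ℓ i : Fin k} (hne : ℓ ≠ i) (u w v : ℝ) (f : Fin k → ℝ)
    (hf : ∀ j, f j = if j = ℓ then u else if j = i then w else v) :
    ∑ j, f j = u + w + ((k:ℝ) - 2) * v := by
  have : ∀ j, f j = (if j = ℓ then u - v else 0) + ((if j = i then w - v else 0) + v) := by
    intro j; rw [hf]
    split_ifs with h1 h2
    · exact absurd (h1.symm.trans h2) hne
    all_goals ring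
  rw [Finset.sum_congr rfl fun j _ => this j]
  rw [Finset.sum_add_distrib, Finset.sum_add_distrib]
  simp [Finset.sum_ite_eq', Finset.sum_const, Finset.card_univ, nsmul_eq_mul]
  ring

lemma fixed_apply {k : ℕ} {C : Fin k → Matrix (Fin k) (Fin k) ℝ}
    (hfix : ∀ σ : Equiv.Perm (Fin k), permAct σ C = C) (σ : Equiv.Perm (Fin k))
    (ℓ i j : Fin k) : C ℓ i j = C (σ ℓ) (σ i) (σ j) := by
  have := congrFun (congrFun (congrFun (hfix σ) (σ ℓ)) (σ i)) (σ j)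
  simpa [permAct] using this

lemma cfix_fixed (k : ℕ) (x y a b : ℝ) (σ : Equiv.Perm (Fin k)) :
    permAct σ (Cfix k x y a b) = Cfix k x y a b := by
  funext ℓ i j
  simp only [permAct, Cfix, EmbeddingLike.apply_eq_iff_eq]

lemma cfix_row {k : ℕ} (x y a b : ℝ) (ℓ i : Fin k) (h : i ≠ ℓ) :
    ∑ j, Cfix k x y a b ℓ i j = a + y + ((k:ℝ) - 2) * b := by
  rw [sum_two_point h.symm a y b _ ?_]
  intro j
  simp only [Cfix]
  split_ifs with h1 h2 h3 h4 h5 h6 h7 <;>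
    first | rfl | (exfalso; subst_vars; simp_all)

lemma cfix_col {k : ℕ} (x y a b : ℝ) (ℓ j : Fin k) (h : j ≠ ℓ) :
    ∑ i, Cfix k x y a b ℓ i j = a + y + ((k:ℝ) - 2) * b := by
  rw [sum_two_point h.symm a y b _ ?_]
  intro i
  simp only [Cfix]
  split_ifs with h1 h2 h3 h4 h5 h6 h7 <;>
    first | rfl | (exfalso; subst_vars; simp_all)

lemma cfix_rowl {k : ℕ} (x y a b : ℝ) (ℓ : Fin k) :
    ∑ j, Cfix k x y a b ℓ ℓ j = x + ((k:ℝ) - 1) * a := by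
  rw [sum_one_point (ℓ := ℓ) x a _ ?_]
  intro j
  simp only [Cfix]
  split_ifs with h1 h2 h3 h4 <;>
    first | rfl | (exfalso; subst_vars; simp_all)

lemma cfix_inSk {k : ℕ} (x y a b : ℝ)
    (h1 : x + ((k:ℝ) - 1) * a = 1) (h2 : y + a + ((k:ℝ) - 2) * b = 0) :
    inSk k (Cfix k x y a b) := by
  intro ℓ
  refine ⟨fun i hi => by rw [cfix_row x y a b ℓ i hi]; linarith,
          fun j hj => by rw [cfix_col x y a b ℓ j hj]; linarith, ?_⟩
  rw [Finset.sum_eq_single ℓ (fun i _ hi => by rw [cfix_row x y a b ℓ i hi]; linarith)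
    (by simp)]
  rw [cfix_rowl]; exact h1

lemma classify {k : ℕ} (hk : 3 ≤ k) (C : Fin k → Matrix (Fin k) (Fin k) ℝ)
    (hC : inSk k C) (hfix : ∀ σ : Equiv.Perm (Fin k), permAct σ C = C) :
    ∃ x y a b : ℝ, x + ((k:ℝ) - 1) * a = 1 ∧ y + a + ((k:ℝ) - 2) * b = 0 ∧
      C = Cfix k x y a b := by
  set e0 : Fin k := ⟨0, by omega⟩ with he0
  set e1 : Fin k := ⟨1, by omega⟩ with he1
  set e2 : Fin k := ⟨2, by omega⟩ with he2
  have h01 : e0 ≠ e1 := by simp [he0, he1, Fin.ext_iff]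
  have h02 : e0 ≠ e2 := by simp [he0, he2, Fin.ext_iff]
  have h12 : e1 ≠ e2 := by simp [he1, he2, Fin.ext_iff]
  set x := C e0 e0 e0 with hxd
  set y := C e0 e1 e1 with hyd
  set a := C e0 e0 e1 with had
  set a' := C e0 e1 e0 with ha'd
  set b := C e0 e1 e2 with hbd
  have hx : ∀ ℓ, C ℓ ℓ ℓ = x := by
    intro ℓ
    have := fixed_apply hfix (Equiv.swap e0 ℓ) e0 e0 e0
    simpa using this.symm
  have hy : ∀ ℓ i, i ≠ ℓ → C ℓ i i = y := by
    intro ℓ i h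
    obtain ⟨σ, h1, h2⟩ := exists_perm_two h01 (Ne.symm h)
    have := fixed_apply hfix σ e0 e1 e1
    rw [h1, h2] at this
    exact this.symm
  have ha : ∀ ℓ j, j ≠ ℓ → C ℓ ℓ j = a := by
    intro ℓ j h
    obtain ⟨σ, h1, h2⟩ := exists_perm_two h01 (Ne.symm h)
    have := fixed_apply hfix σ e0 e0 e1
    rw [h1, h2] at this
    exact this.symm
  have ha' : ∀ ℓ i, i ≠ ℓ → C ℓ i ℓ = a' := by
    intro ℓ i h
    obtain ⟨σ, h1, h2⟩ := exists_perm_two h01 (Ne.symm h)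
    have := fixed_apply hfix σ e0 e1 e0
    rw [h1, h2] at this
    exact this.symm
  have hb : ∀ ℓ i j, i ≠ ℓ → j ≠ ℓ → i ≠ j → C ℓ i j = b := by
    intro ℓ i j hiℓ hjℓ hij
    obtain ⟨σ, h1, h2, h3⟩ := exists_perm_three h01 h02 h12
      (Ne.symm hiℓ) (Ne.symm hjℓ) hij
    have := fixed_apply hfix σ e0 e1 e2
    rw [h1, h2, h3] at this
    exact this.symm
  -- row sum for row e1 of matrix e0
  have hrow : a' + y + ((k:ℝ) - 2) * b = 0 := by
    have hr := (hC e0).1 e1 h01.symm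
    rw [sum_two_point h01 a' y b _ ?_] at hr
    · exact hr
    · intro j
      split_ifs with j1 j2
      · subst j1; exact ha' e0 e1 h01.symm
      · subst j2; exact hy e0 e1 h01.symm
      · exact hb e0 e1 j h01.symm j1 (Ne.symm j2)
  have hcol : a + y + ((k:ℝ) - 2) * b = 0 := by
    have hr := (hC e0).2.1 e1 h01.symm
    rw [sum_two_point h01 a y b _ ?_] at hr
    · exact hr
    · intro i
      split_ifs with j1 j2
      · subst j1; exact ha e0 e1 h01.symm
      · subst j2; exact hy e0 e1 h01.symm
      · exact hb e0 i e1 j1 h01.symm j2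
  have haa : a = a' := by linarith
  have htot : x + ((k:ℝ) - 1) * a = 1 := by
    have ht := (hC e0).2.2
    rw [Finset.sum_eq_single e0 (fun i _ hi => (hC e0).1 i hi) (by simp)] at ht
    rw [sum_one_point (ℓ := e0) x a _ ?_] at ht
    · exact ht
    · intro j
      split_ifs with j1
      · subst j1; exact hx e0
      · exact ha e0 j j1
  refine ⟨x, y, a, b, htot, by linarith, ?_⟩
  funext ℓ i j
  simp only [Cfix]
  split_ifs with h1 h2 h3
  · obtain ⟨rfl, rfl⟩ := h1
    exact hx _
  · subst h2
    exact hy ℓ i (fun h => h1 ⟨h, h⟩)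
  · rcases h3 with rfl | rfl
    · exact ha i j (fun h => h1 ⟨rfl, h⟩)
    · rw [haa]; exact ha' j i (fun h => h1 ⟨h, rfl⟩)
  · push_neg at h3
    exact hb ℓ i j h3.1 h3.2 h2

lemma cfix_add (k : ℕ) (x y a b x' y' a' b' : ℝ) :
    Cfix k x y a b + Cfix k x' y' a' b' = Cfix k (x+x') (y+y') (a+a') (b+b') := by
  funext ℓ i j
  simp only [Pi.add_apply, Matrix.add_apply, Cfix]
  split_ifs <;> rfl

lemma cfix_sub (k : ℕ) (x y a b x' y' a' b' : ℝ) :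
    Cfix k x y a b - Cfix k x' y' a' b' = Cfix k (x-x') (y-y') (a-a') (b-b') := by
  funext ℓ i j
  simp only [Pi.sub_apply, Matrix.sub_apply, Cfix]
  split_ifs <;> rfl

noncomputable def Lmap (k : ℕ) : (ℝ × ℝ) →ₗ[ℝ] (Fin k → Matrix (Fin k) (Fin k) ℝ) where
  toFun p := Cfix k (-(((k:ℝ) - 1) * p.1)) (-(p.1 + ((k:ℝ) - 2) * p.2)) p.1 p.2
  map_add' p q := by
    funext ℓ i j
    simp only [Pi.add_apply, Matrix.add_apply, Cfix, Prod.fst_add, Prod.snd_add]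
    split_ifs <;> ring
  map_smul' r p := by
    funext ℓ i j
    simp only [Pi.smul_apply, Matrix.smul_apply, smul_eq_mul, RingHom.id_apply, Cfix,
      Prod.smul_fst, Prod.smul_snd]
    split_ifs <;> ring

lemma Lmap_apply (k : ℕ) (p : ℝ × ℝ) :
    Lmap k p = Cfix k (-(((k:ℝ) - 1) * p.1)) (-(p.1 + ((k:ℝ) - 2) * p.2)) p.1 p.2 := rfl

lemma Lmap_inj {k : ℕ} (hk : 3 ≤ k) : Function.Injective (Lmap k) := by
  intro p q h
  set e0 : Fin k := ⟨0, by omega⟩ with he0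
  set e1 : Fin k := ⟨1, by omega⟩ with he1
  set e2 : Fin k := ⟨2, by omega⟩ with he2
  have h01 : e0 ≠ e1 := by simp [he0, he1, Fin.ext_iff]
  have h02 : e0 ≠ e2 := by simp [he0, he2, Fin.ext_iff]
  have h12 : e1 ≠ e2 := by simp [he1, he2, Fin.ext_iff]
  have h1 := congrFun (congrFun (congrFun h e0) e0) e1
  have h2 := congrFun (congrFun (congrFun h e0) e1) e2
  simp [Lmap_apply, Cfix, h01, h02, h12, Ne.symm h01, Ne.symm h02, Ne.symm h12] at h1 h2
  exact Prod.ext h1 h2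

theorem stmt3 (k : ℕ) (hk : 3 ≤ k) :
    (∀ C : Fin k → Matrix (Fin k) (Fin k) ℝ, inSk k C →
      ((∀ σ : Equiv.Perm (Fin k), permAct σ C = C) ↔
        ∃ x y a b : ℝ, x + ((k:ℝ) - 1) * a = 1 ∧ y + a + ((k:ℝ) - 2) * b = 0 ∧
          C = Cfix k x y a b)) ∧
    ∃ A : AffineSubspace ℝ (Fin k → Matrix (Fin k) (Fin k) ℝ),
      (A : Set (Fin k → Matrix (Fin k) (Fin k) ℝ)) =
        {C | inSk k C ∧ ∀ σ : Equiv.Perm (Fin k), permAct σ C = C} ∧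
      Module.finrank ℝ A.direction = 2 := by
  constructor
  · intro C hC
    constructor
    · exact classify hk C hC
    · rintro ⟨x, y, a, b, -, -, rfl⟩ σ
      exact cfix_fixed k x y a b σ
  · refine ⟨AffineSubspace.mk' (Cfix k 1 0 0 0) (LinearMap.range (Lmap k)), ?_, ?_⟩
    · ext C
      rw [SetLike.mem_coe, AffineSubspace.mem_mk']
      constructor
      · rintro ⟨q, hq⟩
        rw [vsub_eq_sub, eq_sub_iff_add_eq] at hq
        have hC : C = Cfix k (-(((k:ℝ) - 1) * q.1) + 1) (-(q.1 + ((k:ℝ) - 2) * q.2) + 0)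
            (q.1 + 0) (q.2 + 0) := by
          rw [← cfix_add, ← Lmap_apply]; exact hq.symm
        rw [hC]
        exact ⟨cfix_inSk _ _ _ _ (by ring) (by ring),
          fun σ => cfix_fixed k _ _ _ _ σ⟩
      · rintro ⟨hC, hfix⟩
        obtain ⟨x, y, a, b, hxc, hyc, rfl⟩ := classify hk _ hC hfix
        refine ⟨(a, b), ?_⟩
        rw [vsub_eq_sub, cfix_sub, Lmap_apply]
        simp only [sub_zero]
        have e1 : x - 1 = -(((k:ℝ) - 1) * a) := by linarith
        have e2 : y = -(a + ((k:ℝ) - 2) * b) := by linarith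
        rw [e1, e2]
    · rw [AffineSubspace.direction_mk', LinearMap.finrank_range_of_inj (Lmap_inj hk),
        Module.finrank_prod, Module.finrank_self]
end

section
/- The optimization problem of minimizing g_{S_k} over 𝔖_k attains its minimum at some point of the invariant space 𝔖_k^{fix}; i.e., there exists a Sym(k)-fixed point C with g_{S_k}(C) = inf_{C' ∈ 𝔖_k} g_{S_k}(C'). -/
open Finset Filter

section StmtFourAux

set_option maxHeartbeats 1000000

lemma isSample_singleton' {k : ℕ} (p : Fin k × Fin k) :
    IsSample ({p} : Finset (Fin k × Fin k)) :=
  ⟨Finset.singleton_nonempty p, by simp⟩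

lemma sampleNonempty {k : ℕ} (hk : 0 < k) :
    Nonempty {s : Finset (Fin k × Fin k) // IsSample s} :=
  ⟨⟨{(⟨0, hk⟩, ⟨0, hk⟩)}, isSample_singleton' _⟩⟩

lemma bddAbove_range_gSample {k : ℕ} (C : Fin k → Matrix (Fin k) (Fin k) ℝ) :
    BddAbove (Set.range fun s : {s : Finset (Fin k × Fin k) // IsSample s} => gSample s.1 C) :=
  (Set.finite_range _).bddAbove

lemma gSample_le_gMax {k : ℕ} {s : Finset (Fin k × Fin k)} (hs : IsSample s)
    (C : Fin k → Matrix (Fin k) (Fin k) ℝ) : gSample s C ≤ gMax k C :=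
  le_ciSup (bddAbove_range_gSample C) ⟨s, hs⟩

lemma gMax_le' {k : ℕ} (hk : 0 < k) {C : Fin k → Matrix (Fin k) (Fin k) ℝ} {r : ℝ}
    (h : ∀ s, IsSample s → gSample s C ≤ r) : gMax k C ≤ r :=
  have := sampleNonempty hk
  ciSup_le fun s => h s.1 s.2

lemma abs_entry_le_gSample {k : ℕ} (C : Fin k → Matrix (Fin k) (Fin k) ℝ) (ℓ i j : Fin k) :
    |C ℓ i j| ≤ gSample {(i, j)} C := by
  have : |C ℓ i j| = |gPart {(i, j)} C ℓ| := by simp [gPart]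
  rw [this, gSample]
  exact Finset.single_le_sum (f := fun ℓ' => |gPart {(i, j)} C ℓ'|)
    (fun ℓ' _ => abs_nonneg _) (Finset.mem_univ ℓ)

lemma continuous_entry {k : ℕ} (ℓ i j : Fin k) :
    Continuous (fun C : Fin k → Matrix (Fin k) (Fin k) ℝ => C ℓ i j) := by
  have h2 : Continuous (fun M : Matrix (Fin k) (Fin k) ℝ => M i j) := by fun_prop
  exact h2.comp (continuous_apply ℓ)

lemma continuous_gSample {k : ℕ} (s : Finset (Fin k × Fin k)) :
    Continuous (fun C : Fin k → Matrix (Fin k) (Fin k) ℝ => gSample s C) := by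
  unfold gSample gPart
  exact continuous_finset_sum _ fun ℓ _ => Continuous.abs
      (continuous_finset_sum _ fun p _ => continuous_entry ℓ p.1 p.2)

open Classical in
lemma continuous_gMax {k : ℕ} (hk : 0 < k) : Continuous (gMax k) := by
  have hne := sampleNonempty hk
  have huniv : (Finset.univ : Finset {s : Finset (Fin k × Fin k) // IsSample s}).Nonempty :=
    ⟨hne.some, Finset.mem_univ _⟩
  have heq : gMax k = fun C =>
      (Finset.univ : Finset {s : Finset (Fin k × Fin k) // IsSample s}).sup' huniv
        (fun s => gSample s.1 C) := by
    funext C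
    refine le_antisymm
      (ciSup_le fun s => Finset.le_sup' (fun s => gSample s.1 C) (Finset.mem_univ s)) ?_
    exact Finset.sup'_le _ _ fun s _ => le_ciSup (bddAbove_range_gSample C) s
  rw [heq]
  exact Continuous.finset_sup'_apply huniv fun s _ => continuous_gSample s.1

lemma inSk_permAct {k : ℕ} (σ : Equiv.Perm (Fin k)) {C : Fin k → Matrix (Fin k) (Fin k) ℝ}
    (h : inSk k C) : inSk k (permAct σ C) := by
  intro ℓ
  obtain ⟨h1, h2, h3⟩ := h (σ⁻¹ ℓ)
  have key : ∀ f : Fin k → ℝ, ∑ j, f (σ⁻¹ j) = ∑ j, f j := fun f =>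
    Equiv.sum_comp (σ⁻¹ : Equiv.Perm (Fin k)) f
  refine ⟨fun i hi => ?_, fun j hj => ?_, ?_⟩
  · have : ∑ j, permAct σ C ℓ i j = ∑ j, C (σ⁻¹ ℓ) (σ⁻¹ i) j :=
      key (fun j => C (σ⁻¹ ℓ) (σ⁻¹ i) j)
    rw [this]
    exact h1 _ (fun hc => hi ((Equiv.injective _) hc))
  · have : ∑ i, permAct σ C ℓ i j = ∑ i, C (σ⁻¹ ℓ) i (σ⁻¹ j) :=
      key (fun i => C (σ⁻¹ ℓ) i (σ⁻¹ j))
    rw [this]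
    exact h2 _ (fun hc => hj ((Equiv.injective _) hc))
  · have e1 : ∀ i, ∑ j, permAct σ C ℓ i j = ∑ j, C (σ⁻¹ ℓ) (σ⁻¹ i) j := fun i =>
      key (fun j => C (σ⁻¹ ℓ) (σ⁻¹ i) j)
    simp only [e1]
    rw [key (fun i => ∑ j, C (σ⁻¹ ℓ) i j)]
    exact h3

lemma isSample_image {k : ℕ} (σ : Equiv.Perm (Fin k)) {s : Finset (Fin k × Fin k)}
    (hs : IsSample s) : IsSample (s.image fun p => (σ⁻¹ p.1, σ⁻¹ p.2)) := by
  refine ⟨hs.1.image _, ?_⟩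
  intro p hp q hq hpq
  simp only [Finset.mem_image] at hp hq
  obtain ⟨a, ha, rfl⟩ := hp
  obtain ⟨b, hb, rfl⟩ := hq
  intro h2
  have hab : a.2 = b.2 := (Equiv.injective _) h2
  have : a = b := by
    by_contra hne
    exact hs.2 a ha b hb hne hab
  exact hpq (by rw [this])

lemma gSample_permAct {k : ℕ} (σ : Equiv.Perm (Fin k)) (s : Finset (Fin k × Fin k))
    (C : Fin k → Matrix (Fin k) (Fin k) ℝ) :
    gSample s (permAct σ C) = gSample (s.image fun p => (σ⁻¹ p.1, σ⁻¹ p.2)) C := by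
  have hinj : ∀ x ∈ s, ∀ y ∈ s,
      (fun p : Fin k × Fin k => (σ⁻¹ p.1, σ⁻¹ p.2)) x
        = (fun p : Fin k × Fin k => (σ⁻¹ p.1, σ⁻¹ p.2)) y → x = y := by
    intro a _ b _ h
    obtain ⟨h1, h2⟩ := Prod.ext_iff.1 h
    exact Prod.ext ((Equiv.injective _) h1) ((Equiv.injective _) h2)
  have hpart : ∀ ℓ, gPart s (permAct σ C) ℓ
      = gPart (s.image fun p => (σ⁻¹ p.1, σ⁻¹ p.2)) C (σ⁻¹ ℓ) := by
    intro ℓ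
    rw [gPart, gPart, Finset.sum_image hinj]
    rfl
  unfold gSample
  simp only [hpart]
  exact Equiv.sum_comp (σ⁻¹ : Equiv.Perm (Fin k))
    (fun ℓ => |gPart (s.image fun p => (σ⁻¹ p.1, σ⁻¹ p.2)) C ℓ|)

/-- average over the symmetric group -/
noncomputable def avgC {k : ℕ} (C : Fin k → Matrix (Fin k) (Fin k) ℝ) :
    Fin k → Matrix (Fin k) (Fin k) ℝ :=
  fun ℓ i j => (∑ σ : Equiv.Perm (Fin k), permAct σ C ℓ i j)
    / (Fintype.card (Equiv.Perm (Fin k)) : ℝ)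

lemma avg_fixed {k : ℕ} (C : Fin k → Matrix (Fin k) (Fin k) ℝ) (τ : Equiv.Perm (Fin k)) :
    permAct τ (avgC C) = avgC C := by
  funext ℓ i j
  show (∑ σ : Equiv.Perm (Fin k), C (σ⁻¹ (τ⁻¹ ℓ)) (σ⁻¹ (τ⁻¹ i)) (σ⁻¹ (τ⁻¹ j)))
      / (Fintype.card (Equiv.Perm (Fin k)) : ℝ)
    = (∑ σ : Equiv.Perm (Fin k), C (σ⁻¹ ℓ) (σ⁻¹ i) (σ⁻¹ j))
      / (Fintype.card (Equiv.Perm (Fin k)) : ℝ)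
  congr 1
  have h := Equiv.sum_comp (Equiv.mulLeft τ)
    (fun σ : Equiv.Perm (Fin k) => C (σ⁻¹ ℓ) (σ⁻¹ i) (σ⁻¹ j))
  rw [← h]
  refine Finset.sum_congr rfl fun σ _ => ?_
  simp [mul_inv_rev, Equiv.Perm.mul_apply]

lemma card_perm_pos {k : ℕ} : (0 : ℝ) < (Fintype.card (Equiv.Perm (Fin k)) : ℝ) := by
  exact_mod_cast Fintype.card_pos

lemma inSk_avg {k : ℕ} {C : Fin k → Matrix (Fin k) (Fin k) ℝ} (hC : inSk k C) :
    inSk k (avgC C) := by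
  have hn : (Fintype.card (Equiv.Perm (Fin k)) : ℝ) ≠ 0 := card_perm_pos.ne'
  intro ℓ
  refine ⟨fun i hi => ?_, fun j hj => ?_, ?_⟩
  · unfold avgC
    rw [← Finset.sum_div, Finset.sum_comm]
    rw [Finset.sum_congr rfl (fun σ _ => ((inSk_permAct σ hC) ℓ).1 i hi)]
    simp
  · unfold avgC
    rw [← Finset.sum_div, Finset.sum_comm]
    rw [Finset.sum_congr rfl (fun σ _ => ((inSk_permAct σ hC) ℓ).2.1 j hj)]
    simp
  · unfold avgC
    simp only [← Finset.sum_div]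
    have h1 : ∀ i : Fin k, ∑ j, ∑ σ : Equiv.Perm (Fin k), permAct σ C ℓ i j
        = ∑ σ : Equiv.Perm (Fin k), ∑ j, permAct σ C ℓ i j := fun i => Finset.sum_comm
    simp only [h1]
    rw [Finset.sum_comm]
    rw [Finset.sum_congr rfl (fun σ _ => ((inSk_permAct σ hC) ℓ).2.2)]
    rw [Finset.sum_const, Finset.card_univ, nsmul_eq_mul, mul_one, div_self hn]

lemma gPart_avg {k : ℕ} (s : Finset (Fin k × Fin k)) (C : Fin k → Matrix (Fin k) (Fin k) ℝ)
    (ℓ : Fin k) :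
    gPart s (avgC C) ℓ
      = (∑ σ : Equiv.Perm (Fin k), gPart s (permAct σ C) ℓ)
        / (Fintype.card (Equiv.Perm (Fin k)) : ℝ) := by
  unfold gPart avgC
  rw [← Finset.sum_div]
  congr 1
  exact Finset.sum_comm

lemma gMax_avg_le {k : ℕ} (hk : 0 < k) (C : Fin k → Matrix (Fin k) (Fin k) ℝ) :
    gMax k (avgC C) ≤ gMax k C := by
  refine gMax_le' hk fun s hs => ?_
  have hn : (0 : ℝ) < (Fintype.card (Equiv.Perm (Fin k)) : ℝ) := card_perm_pos
  calc gSample s (avgC C)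
      = ∑ ℓ, |(∑ σ : Equiv.Perm (Fin k), gPart s (permAct σ C) ℓ)
          / (Fintype.card (Equiv.Perm (Fin k)) : ℝ)| := by
        unfold gSample
        exact Finset.sum_congr rfl fun ℓ _ => by rw [gPart_avg]
    _ ≤ ∑ ℓ, (∑ σ : Equiv.Perm (Fin k), |gPart s (permAct σ C) ℓ|)
          / (Fintype.card (Equiv.Perm (Fin k)) : ℝ) := by
        refine Finset.sum_le_sum fun ℓ _ => ?_
        rw [abs_div, abs_of_pos hn]
        exact div_le_div_of_nonneg_right (Finset.abs_sum_le_sum_abs _ _) hn.le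
    _ = (∑ σ : Equiv.Perm (Fin k), gSample s (permAct σ C))
          / (Fintype.card (Equiv.Perm (Fin k)) : ℝ) := by
        rw [← Finset.sum_div]
        congr 1
        rw [Finset.sum_comm]
        rfl
    _ ≤ (∑ _σ : Equiv.Perm (Fin k), gMax k C)
          / (Fintype.card (Equiv.Perm (Fin k)) : ℝ) := by
        refine div_le_div_of_nonneg_right ?_ hn.le
        refine Finset.sum_le_sum fun σ _ => ?_
        rw [gSample_permAct]
        exact gSample_le_gMax (isSample_image σ hs) C
    _ = gMax k C := by
        rw [Finset.sum_const, Finset.card_univ, nsmul_eq_mul, mul_comm,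
          mul_div_assoc, div_self hn.ne', mul_one]

lemma exists_min (k : ℕ) (hk : 0 < k) :
    ∃ C : Fin k → Matrix (Fin k) (Fin k) ℝ, inSk k C ∧
      ∀ C' : Fin k → Matrix (Fin k) (Fin k) ℝ, inSk k C' → gMax k C ≤ gMax k C' := by
  classical
  set C0 : Fin k → Matrix (Fin k) (Fin k) ℝ
    := fun ℓ i j => if i = ℓ ∧ j = ℓ then 1 else 0 with hC0def
  have hC0Sk : inSk k C0 := by
    intro ℓ
    refine ⟨fun i hi => ?_, fun j hj => ?_, ?_⟩
    · simp [hC0def, hi]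
    · simp [hC0def, hj]
    · simp [hC0def, ite_and, Finset.sum_ite_eq', Finset.mem_univ]
  set M : ℝ := gMax k C0 with hM
  set K : Set (Fin k → Matrix (Fin k) (Fin k) ℝ)
    := {C | inSk k C ∧ ∀ s : Finset (Fin k × Fin k), IsSample s → gSample s C ≤ M} with hK
  have hC0K : C0 ∈ K := ⟨hC0Sk, fun s hs => gSample_le_gMax hs C0⟩
  have hclosed : IsClosed K := by
    have hrepr : K = {C | inSk k C} ∩
        ⋂ (s : Finset (Fin k × Fin k)) (_ : IsSample s),
          {C : Fin k → Matrix (Fin k) (Fin k) ℝ | gSample s C ≤ M} := by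
      ext C
      simp only [hK, Set.mem_setOf_eq, Set.mem_inter_iff, Set.mem_iInter]
    have hSkrepr : {C : Fin k → Matrix (Fin k) (Fin k) ℝ | inSk k C} =
        ⋂ (ℓ : Fin k),
          ((⋂ (i : Fin k) (_ : i ≠ ℓ),
              {C : Fin k → Matrix (Fin k) (Fin k) ℝ | ∑ j, C ℓ i j = 0}) ∩
           ((⋂ (j : Fin k) (_ : j ≠ ℓ),
              {C : Fin k → Matrix (Fin k) (Fin k) ℝ | ∑ i, C ℓ i j = 0}) ∩
            {C : Fin k → Matrix (Fin k) (Fin k) ℝ | ∑ i, ∑ j, C ℓ i j = 1})) := by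
      ext C
      simp only [Set.mem_setOf_eq, Set.mem_iInter, Set.mem_inter_iff, inSk]
    rw [hrepr]
    refine IsClosed.inter ?_
      (isClosed_iInter fun s => isClosed_iInter fun _ =>
        isClosed_le (continuous_gSample s) continuous_const)
    rw [hSkrepr]
    refine isClosed_iInter fun ℓ => IsClosed.inter ?_ (IsClosed.inter ?_ ?_)
    · exact isClosed_iInter fun i => isClosed_iInter fun _ =>
        isClosed_eq (continuous_finset_sum _ fun j _ => continuous_entry ℓ i j)
          continuous_const
    · exact isClosed_iInter fun j => isClosed_iInter fun _ =>
        isClosed_eq (continuous_finset_sum _ fun i _ => continuous_entry ℓ i j)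
          continuous_const
    · exact isClosed_eq (continuous_finset_sum _ fun i _ =>
        continuous_finset_sum _ fun j _ => continuous_entry ℓ i j) continuous_const
  have hsubset : K ⊆ Set.univ.pi fun _ : Fin k =>
      (Set.univ.pi fun _ : Fin k => Set.univ.pi fun _ : Fin k => Set.Icc (-M) M :
        Set (Matrix (Fin k) (Fin k) ℝ)) := by
    intro C hC
    intro ℓ _
    intro i _
    intro j _
    have h1 : |C ℓ i j| ≤ M :=
      le_trans (abs_entry_le_gSample C ℓ i j) (hC.2 _ (isSample_singleton' (i, j)))
    exact ⟨neg_le_of_abs_le h1, le_of_abs_le h1⟩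
  have hcomp : IsCompact K := by
    refine IsCompact.of_isClosed_subset ?_ hclosed hsubset
    exact isCompact_univ_pi fun _ => isCompact_univ_pi fun _ =>
      isCompact_univ_pi fun _ => isCompact_Icc
  obtain ⟨C1, hC1K, hminOn⟩ :=
    hcomp.exists_isMinOn ⟨C0, hC0K⟩ ((continuous_gMax hk).continuousOn)
  refine ⟨C1, hC1K.1, fun C' hC' => ?_⟩
  by_cases h : gMax k C' ≤ M
  · exact isMinOn_iff.1 hminOn C' ⟨hC', fun s hs => le_trans (gSample_le_gMax hs C') h⟩
  · have h1 : gMax k C1 ≤ M := isMinOn_iff.1 hminOn C0 hC0K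
    linarith [lt_of_not_ge h]

end StmtFourAux

theorem stmt4 (k : ℕ) (hk : 0 < k) :
    ∃ C : Fin k → Matrix (Fin k) (Fin k) ℝ, inSk k C ∧
      (∀ σ : Equiv.Perm (Fin k), permAct σ C = C) ∧
      ∀ C' : Fin k → Matrix (Fin k) (Fin k) ℝ, inSk k C' → gMax k C ≤ gMax k C' := by
  obtain ⟨C1, hSk, hmin⟩ := exists_min k hk
  refine ⟨avgC C1, inSk_avg hSk, fun σ => avg_fixed C1 σ, fun C' h' => ?_⟩
  exact le_trans (gMax_avg_le hk C1) (hmin C' h')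
end

section
/- Let C*_k ∈ 𝔖_k be the strong homogeneous flow given by c^{*(ℓ)}_{i,j} = 2/k − 1/k² if i = j = ℓ; 1/k − 1/k² if exactly one of i, j equals ℓ; and −1/k² otherwise. Then for every k-sample s ∈ S_k, g_s(C*_k) = (3k·α(s) − 2β(s)·α(s))/k², where α(s) = |s| and β(s) is the number of distinct indices appearing as a coordinate of some element of s. -/
open Finset Filter

theorem stmt5 (k : ℕ) (hk : 0 < k) (s : Finset (Fin k × Fin k)) (hs : IsSample s) :
    gSample s (Cstar k) =
      (3 * (k:ℝ) * (s.card : ℝ) - 2 * (beta s : ℝ) * (s.card : ℝ)) / (k:ℝ)^2 := by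
  classical
  have hK : (0:ℝ) < (k:ℝ) := by exact_mod_cast hk
  have hK2 : (0:ℝ) < (k:ℝ)^2 := by positivity
  -- α ≤ k
  have hinj : Set.InjOn Prod.snd (↑s : Set (Fin k × Fin k)) := by
    intro p hp q hq h
    by_contra hne
    exact hs.2 p hp q hq hne h
  have hcard : s.card ≤ k := by
    calc s.card = (s.image Prod.snd).card := (Finset.card_image_of_injOn hinj).symm
    _ ≤ Fintype.card (Fin k) := Finset.card_le_univ _
    _ = k := Fintype.card_fin k
  have hcardR : (s.card : ℝ) ≤ (k:ℝ) := by exact_mod_cast hcard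
  -- gPart formula
  have hgPart : ∀ ℓ : Fin k, gPart s (Cstar k) ℓ
      = (mult s ℓ : ℝ)/(k:ℝ) - (s.card : ℝ)/(k:ℝ)^2 := by
    intro ℓ
    have hentry : ∀ p : Fin k × Fin k, Cstar k ℓ p.1 p.2 =
        ((if p.1 = ℓ then (1:ℝ)/(k:ℝ) else 0) + (if p.2 = ℓ then (1:ℝ)/(k:ℝ) else 0))
          - 1/(k:ℝ)^2 := by
      intro p
      unfold Cstar
      by_cases h1 : p.1 = ℓ <;> by_cases h2 : p.2 = ℓ <;>
        simp [h1, h2] <;> ring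
    unfold gPart
    rw [Finset.sum_congr rfl (fun p _ => hentry p), Finset.sum_sub_distrib,
      Finset.sum_add_distrib]
    rw [← Finset.sum_filter, ← Finset.sum_filter, Finset.sum_const, Finset.sum_const,
      Finset.sum_const]
    unfold mult
    push_cast
    simp [nsmul_eq_mul]
    ring
  -- the support set T
  set T : Finset (Fin k) := s.image Prod.fst ∪ s.image Prod.snd with hT
  have hmem : ∀ ℓ : Fin k, ℓ ∈ T ↔ mult s ℓ ≠ 0 := by
    intro ℓ
    simp only [hT, Finset.mem_union, Finset.mem_image, mult, ne_eq, Nat.add_eq_zero, not_and_or,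
      Finset.card_eq_zero, ← Finset.nonempty_iff_ne_empty, Finset.filter_nonempty_iff]
    all_goals tauto
  -- sum of mult over T equals sum over univ = 2α
  have hmultsum : ∑ ℓ : Fin k, (mult s ℓ : ℝ) = 2 * (s.card : ℝ) := by
    unfold mult
    push_cast
    rw [Finset.sum_add_distrib]
    have h1 : ∑ ℓ : Fin k, ((s.filter (fun p => p.1 = ℓ)).card : ℝ) = (s.card : ℝ) := by
      have h := Finset.card_eq_sum_card_fiberwise (f := Prod.fst) (s := s) (t := Finset.univ)
        (fun x _ => Finset.mem_univ _)
      rw [h]; push_cast; rfl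
    have h2 : ∑ ℓ : Fin k, ((s.filter (fun p => p.2 = ℓ)).card : ℝ) = (s.card : ℝ) := by
      have h := Finset.card_eq_sum_card_fiberwise (f := Prod.snd) (s := s) (t := Finset.univ)
        (fun x _ => Finset.mem_univ _)
      rw [h]; push_cast; rfl
    rw [h1, h2]; ring
  have hmultT : ∑ ℓ ∈ T, (mult s ℓ : ℝ) = 2 * (s.card : ℝ) := by
    rw [← hmultsum]
    apply Finset.sum_subset (Finset.subset_univ T)
    intro ℓ _ hℓ
    have : mult s ℓ = 0 := by
      by_contra h
      exact hℓ ((hmem ℓ).2 h)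
    simp [this]
  -- abs values
  have habsT : ∀ ℓ ∈ T, |gPart s (Cstar k) ℓ|
      = (mult s ℓ : ℝ)/(k:ℝ) - (s.card : ℝ)/(k:ℝ)^2 := by
    intro ℓ hℓ
    rw [hgPart ℓ]
    apply abs_of_nonneg
    have h1 : (1:ℕ) ≤ mult s ℓ := Nat.one_le_iff_ne_zero.2 ((hmem ℓ).1 hℓ)
    have h1R : (1:ℝ) ≤ (mult s ℓ : ℝ) := by exact_mod_cast h1
    have : (s.card : ℝ)/(k:ℝ)^2 ≤ (1:ℝ)/(k:ℝ) := by
      rw [div_le_div_iff₀ hK2 hK]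
      nlinarith
    have h2 : (1:ℝ)/(k:ℝ) ≤ (mult s ℓ : ℝ)/(k:ℝ) := by gcongr
    linarith
  have habsTc : ∀ ℓ ∈ Tᶜ, |gPart s (Cstar k) ℓ| = (s.card : ℝ)/(k:ℝ)^2 := by
    intro ℓ hℓ
    have h0 : mult s ℓ = 0 := by
      by_contra h
      exact (Finset.mem_compl.1 hℓ) ((hmem ℓ).2 h)
    rw [hgPart ℓ, h0]
    simp
    positivity
  -- split the sum
  have hbeta : (beta s : ℝ) = (T.card : ℝ) := by rfl
  have hTc : (Tᶜ.card : ℝ) = (k:ℝ) - (T.card : ℝ) := by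
    have := Finset.card_compl (s := T)
    rw [this]
    have hle : T.card ≤ Fintype.card (Fin k) := Finset.card_le_univ _
    push_cast [Nat.cast_sub hle]
    simp
  unfold gSample
  rw [← Finset.sum_add_sum_compl T]
  rw [Finset.sum_congr rfl habsT, Finset.sum_congr rfl habsTc]
  rw [Finset.sum_sub_distrib, ← Finset.sum_div, hmultT,
    Finset.sum_const, Finset.sum_const, nsmul_eq_mul, nsmul_eq_mul, hTc, ← hbeta]
  field_simp
  ring
end

section
/- Define h : ℝ² → ℝ² by the coefficient map of the averaged perturbation over S_k(d,d,d): if every s in S_k(d,d,d) lies in S_k^†(C), then Σ_{s ∈ S_k(d,d,d)} (g_s(C+Δ) − g_s(C)) = A·Σ_{i=1}^k δ^{(i)}_{i,i} + B·Σ_{i≠j} δ^{(i)}_{j,j}, where A = C(k−1, d−1) and B = C(k−2, d−2) − C(k−2, d−1), for any Δ = C' − C with C' in a suitable neighborhood of C in 𝔖_k, k ≥ 3, d ≥ 2. -/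
open Finset Filter

/-- S_k(d,d,d): samples consisting of d diagonal elements. -/
def Sddd (k d : ℕ) : Finset (Finset (Fin k × Fin k)) :=
  (Finset.univ : Finset (Finset (Fin k × Fin k))).filter
    (fun s => s.card = d ∧ ∀ p ∈ s, p.1 = p.2)


lemma count_one {α : Type*} [DecidableEq α] (A : Finset α) (d : ℕ) (hd : 1 ≤ d)
    (i : α) (hi : i ∈ A) :
    ((A.powersetCard d).filter (fun T => i ∈ T)).card = (A.card - 1).choose (d - 1) := by
  rw [← Finset.card_erase_of_mem hi, ← Finset.card_powersetCard]
  apply Finset.card_nbij' (fun T => T.erase i) (fun T => insert i T)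
  · intro T hT
    simp only [Finset.mem_coe, mem_filter, mem_powersetCard] at hT
    simp only [Finset.mem_coe, mem_powersetCard]
    refine ⟨fun x hx => ?_, ?_⟩
    · rw [Finset.mem_erase] at hx ⊢
      exact ⟨hx.1, hT.1.1 hx.2⟩
    · rw [Finset.card_erase_of_mem hT.2, hT.1.2]
  · intro T hT
    simp only [Finset.mem_coe, mem_powersetCard] at hT
    have hiT : i ∉ T := fun h => (Finset.mem_erase.mp (hT.1 h)).1 rfl
    simp only [Finset.mem_coe, mem_filter, mem_powersetCard]
    refine ⟨⟨fun x hx => ?_, ?_⟩, Finset.mem_insert_self _ _⟩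
    · rcases Finset.mem_insert.mp hx with rfl | hx
      · exact hi
      · exact Finset.mem_of_mem_erase (hT.1 hx)
    · rw [Finset.card_insert_of_notMem hiT, hT.2]
      omega
  · intro T hT
    simp only [Finset.mem_coe, mem_filter, mem_powersetCard] at hT
    exact Finset.insert_erase hT.2
  · intro T hT
    simp only [Finset.mem_coe, mem_powersetCard] at hT
    have hiT : i ∉ T := fun h => (Finset.mem_erase.mp (hT.1 h)).1 rfl
    exact Finset.erase_insert hiT

lemma count_two {α : Type*} [DecidableEq α] (A : Finset α) (d : ℕ) (hd : 2 ≤ d)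
    (i ℓ : α) (hi : i ∈ A) (hℓ : ℓ ∈ A) (hne : ℓ ≠ i) :
    ((A.powersetCard d).filter (fun T => i ∈ T ∧ ℓ ∈ T)).card
      = (A.card - 2).choose (d - 2) := by
  have h1 : ((A.powersetCard d).filter (fun T => i ∈ T ∧ ℓ ∈ T)).card
      = (((A.erase i).powersetCard (d-1)).filter (fun T => ℓ ∈ T)).card := by
    apply Finset.card_nbij' (fun T => T.erase i) (fun T => insert i T)
    · intro T hT
      simp only [Finset.mem_coe, mem_filter, mem_powersetCard] at hT ⊢
      refine ⟨⟨fun x hx => ?_, ?_⟩, ?_⟩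
      · rw [Finset.mem_erase] at hx ⊢
        exact ⟨hx.1, hT.1.1 hx.2⟩
      · rw [Finset.card_erase_of_mem hT.2.1, hT.1.2]
      · exact Finset.mem_erase.mpr ⟨hne, hT.2.2⟩
    · intro T hT
      simp only [Finset.mem_coe, mem_filter, mem_powersetCard] at hT ⊢
      have hiT : i ∉ T := fun h => (Finset.mem_erase.mp (hT.1.1 h)).1 rfl
      refine ⟨⟨fun x hx => ?_, ?_⟩, Finset.mem_insert_self _ _,
        Finset.mem_insert_of_mem hT.2⟩
      · rcases Finset.mem_insert.mp hx with rfl | hx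
        · exact hi
        · exact Finset.mem_of_mem_erase (hT.1.1 hx)
      · rw [Finset.card_insert_of_notMem hiT, hT.1.2]
        omega
    · intro T hT
      simp only [Finset.mem_coe, mem_filter, mem_powersetCard] at hT
      exact Finset.insert_erase hT.2.1
    · intro T hT
      simp only [Finset.mem_coe, mem_filter, mem_powersetCard] at hT
      have hiT : i ∉ T := fun h => (Finset.mem_erase.mp (hT.1.1 h)).1 rfl
      exact Finset.erase_insert hiT
  rw [h1, count_one (A.erase i) (d-1) (by omega) ℓ (Finset.mem_erase.mpr ⟨hne, hℓ⟩),
    Finset.card_erase_of_mem hi]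
  congr 1 <;> omega

lemma diag_inj (k : ℕ) : Function.Injective (fun i : Fin k => ((i,i) : Fin k × Fin k)) := by
  intro a b h; simpa using congrArg Prod.fst h

lemma Sddd_eq (k d : ℕ) :
    Sddd k d = (Finset.univ.powersetCard d).image
      (fun T => T.image (fun i : Fin k => ((i,i) : Fin k × Fin k))) := by
  ext s
  simp only [Sddd, mem_filter, mem_univ, true_and, Finset.mem_image, mem_powersetCard,
    subset_univ, true_and]
  constructor
  · rintro ⟨hcard, hdiag⟩
    refine ⟨s.image Prod.fst, ?_, ?_⟩
    · rw [Finset.card_image_of_injOn, hcard]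
      intro p hp q hq h
      have := hdiag p hp; have := hdiag q hq
      exact Prod.ext h (by simp_all)
    · ext p
      simp only [Finset.mem_image, exists_exists_and_eq_and]
      constructor
      · rintro ⟨q, hq, h⟩
        have hq' : ((q.1, q.1) : Fin k × Fin k) = q := Prod.ext rfl (hdiag q hq)
        exact (hq'.symm.trans h) ▸ hq
      · intro hp
        exact ⟨p, hp, Prod.ext rfl (hdiag p hp)⟩
  · rintro ⟨T, hT, rfl⟩
    refine ⟨by rw [Finset.card_image_of_injective _ (diag_inj k), hT], ?_⟩
    simp only [Finset.mem_image]
    rintro p ⟨i, hi, rfl⟩; rfl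

lemma mult_image_eq_zero_iff {k : ℕ} (T : Finset (Fin k)) (ℓ : Fin k) :
    mult (T.image (fun i : Fin k => ((i,i) : Fin k × Fin k))) ℓ = 0 ↔ ℓ ∉ T := by
  simp only [mult, Nat.add_eq_zero, Finset.card_eq_zero, Finset.filter_eq_empty_iff,
    Finset.mem_image]
  constructor
  · rintro ⟨h1, _⟩ hℓ
    exact h1 ⟨ℓ, hℓ, rfl⟩ rfl
  · intro hℓ
    constructor <;> (rintro p ⟨i, hi, rfl⟩ h; simp only at h; subst h; exact hℓ hi)

theorem stmt12 (k d : ℕ) (hk : 3 ≤ k) (hd : 2 ≤ d) (hdk : d ≤ k)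
    (C Δ : Fin k → Matrix (Fin k) (Fin k) ℝ)
    (hC : inSk k C) (hCΔ : inSk k (C + Δ))
    (hsign : ∀ s ∈ Sddd k d, ∀ ℓ : Fin k,
      (mult s ℓ ≠ 0 → 0 < gPart s C ℓ ∧ 0 < gPart s (C + Δ) ℓ) ∧
      (mult s ℓ = 0 → gPart s C ℓ < 0 ∧ gPart s (C + Δ) ℓ < 0)) :
    ∑ s ∈ Sddd k d, (gSample s (C + Δ) - gSample s C) =
      ((k-1).choose (d-1) : ℝ) * (∑ i : Fin k, Δ i i i) +
      (((k-2).choose (d-2) : ℝ) - ((k-2).choose (d-1) : ℝ)) *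
        (∑ i : Fin k, ∑ j : Fin k, if j = i then 0 else Δ i j j) := by
  classical
  set A : ℝ := ((k-1).choose (d-1) : ℝ) with hA
  set B : ℝ := ((k-2).choose (d-2) : ℝ) - ((k-2).choose (d-1) : ℝ) with hB
  set P := (Finset.univ : Finset (Fin k)).powersetCard d with hPdef
  have hinj : Function.Injective
      (Finset.image (fun i : Fin k => ((i,i) : Fin k × Fin k))) :=
    Finset.image_injective (diag_inj k)
  rw [Sddd_eq, Finset.sum_image (fun a _ b _ h => hinj h)]
  -- Step 2 : per-T evaluation
  have step2 : ∀ T ∈ P,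
      gSample (T.image (fun i : Fin k => ((i,i) : Fin k × Fin k))) (C + Δ)
        - gSample (T.image (fun i : Fin k => ((i,i) : Fin k × Fin k))) C
      = ∑ ℓ : Fin k, (if ℓ ∈ T then (1:ℝ) else -1) * ∑ i ∈ T, Δ ℓ i i := by
    intro T hT
    set s := T.image (fun i : Fin k => ((i,i) : Fin k × Fin k)) with hs
    have hsS : s ∈ Sddd k d := by
      rw [Sddd_eq]; exact Finset.mem_image_of_mem _ hT
    have hgd : ∀ ℓ, gPart s (C + Δ) ℓ = gPart s C ℓ + gPart s Δ ℓ := by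
      intro ℓ
      simp only [gPart, Pi.add_apply, Matrix.add_apply, Finset.sum_add_distrib]
    have hΔ : ∀ ℓ, gPart s Δ ℓ = ∑ i ∈ T, Δ ℓ i i := by
      intro ℓ
      rw [hs, gPart, Finset.sum_image (fun a _ b _ h => diag_inj k h)]
    unfold gSample
    rw [← Finset.sum_sub_distrib]
    apply Finset.sum_congr rfl
    intro ℓ _
    by_cases hℓ : ℓ ∈ T
    · have hm : mult s ℓ ≠ 0 := by
        rw [Ne, hs, mult_image_eq_zero_iff]; simpa using hℓ
      obtain ⟨h1, h2⟩ := (hsign s hsS ℓ).1 hm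
      rw [abs_of_pos h2, abs_of_pos h1, if_pos hℓ, one_mul, hgd, ← hΔ]; ring
    · have hm : mult s ℓ = 0 := by rw [hs, mult_image_eq_zero_iff]; exact hℓ
      obtain ⟨h1, h2⟩ := (hsign s hsS ℓ).2 hm
      rw [abs_of_neg h2, abs_of_neg h1, if_neg hℓ, hgd, ← hΔ]; ring
  rw [Finset.sum_congr rfl step2]
  -- Step 3 : coefficient computation
  have expand : ∀ T ∈ P, ∀ ℓ ∈ (Finset.univ : Finset (Fin k)),
      (if ℓ ∈ T then (1:ℝ) else -1) * ∑ i ∈ T, Δ ℓ i i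
      = ∑ i : Fin k, (if i ∈ T then (if ℓ ∈ T then (1:ℝ) else -1) else 0) * Δ ℓ i i := by
    intro T _ ℓ _
    rw [Finset.mul_sum]
    rw [show (∑ i : Fin k, (if i ∈ T then (if ℓ ∈ T then (1:ℝ) else -1) else 0) * Δ ℓ i i)
        = ∑ i : Fin k, (if i ∈ T then (if ℓ ∈ T then (1:ℝ) else -1) * Δ ℓ i i else 0) from
      Finset.sum_congr rfl (fun i _ => by split <;> simp)]
    rw [Finset.sum_ite_mem, Finset.univ_inter]
  have step3 : (∑ T ∈ P, ∑ ℓ : Fin k, (if ℓ ∈ T then (1:ℝ) else -1) * ∑ i ∈ T, Δ ℓ i i)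
      = ∑ ℓ : Fin k, ∑ i : Fin k,
          (∑ T ∈ P, (if i ∈ T then (if ℓ ∈ T then (1:ℝ) else -1) else 0)) * Δ ℓ i i := by
    rw [Finset.sum_congr rfl (fun T hT => Finset.sum_congr rfl (expand T hT))]
    rw [Finset.sum_comm]
    apply Finset.sum_congr rfl
    intro ℓ _
    rw [Finset.sum_comm]
    apply Finset.sum_congr rfl
    intro i _
    rw [Finset.sum_mul]
  rw [step3]
  -- coefficients
  have hkcard : (Finset.univ : Finset (Fin k)).card = k := by simp
  have pascal : (k-1).choose (d-1) = (k-2).choose (d-2) + (k-2).choose (d-1) := by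
    have h1 : k - 1 = (k-2) + 1 := by omega
    have h2 : d - 1 = (d-2) + 1 := by omega
    rw [h1, h2, Nat.choose_succ_succ]
  have coeff : ∀ ℓ i : Fin k,
      (∑ T ∈ P, (if i ∈ T then (if ℓ ∈ T then (1:ℝ) else -1) else 0))
      = if ℓ = i then A else B := by
    intro ℓ i
    have hsplit : ∀ T ∈ P, (if i ∈ T then (if ℓ ∈ T then (1:ℝ) else -1) else 0)
        = (if i ∈ T ∧ ℓ ∈ T then (1:ℝ) else 0) - (if i ∈ T ∧ ℓ ∉ T then (1:ℝ) else 0) := by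
      intro T _
      by_cases h1 : i ∈ T <;> by_cases h2 : ℓ ∈ T <;> simp [h1, h2]
    rw [Finset.sum_congr rfl hsplit, Finset.sum_sub_distrib, Finset.sum_boole, Finset.sum_boole]
    have hcard1 : (P.filter (fun T => i ∈ T)).card = (k-1).choose (d-1) := by
      rw [hPdef, count_one _ d (by omega) i (Finset.mem_univ i), hkcard]
    by_cases hli : ℓ = i
    · subst hli
      have e1 : (P.filter (fun T => ℓ ∈ T ∧ ℓ ∈ T)) = P.filter (fun T => ℓ ∈ T) := by
        apply Finset.filter_congr; intro T _; simp
      have e2 : (P.filter (fun T => ℓ ∈ T ∧ ℓ ∉ T)) = ∅ := by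
        apply Finset.filter_false_of_mem; intro T _; simp
      rw [e1, e2]
      simp [hA, hcard1]
    · have hcard2 : (P.filter (fun T => i ∈ T ∧ ℓ ∈ T)).card = (k-2).choose (d-2) := by
        rw [hPdef, count_two _ d hd i ℓ (Finset.mem_univ i) (Finset.mem_univ ℓ) hli, hkcard]
      have hcard3 : (P.filter (fun T => i ∈ T ∧ ℓ ∉ T)).card = (k-2).choose (d-1) := by
        have hsum := Finset.card_filter_add_card_filter_not
          (s := P.filter (fun T => i ∈ T)) (p := fun T => ℓ ∈ T)
        rw [Finset.filter_filter, Finset.filter_filter] at hsum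
        have hc2' : (P.filter (fun T => i ∈ T ∧ ℓ ∈ T)).card = (k-2).choose (d-2) := hcard2
        omega
      rw [hcard2, hcard3, if_neg hli, hB]
  rw [show (∑ ℓ : Fin k, ∑ i : Fin k,
        (∑ T ∈ P, (if i ∈ T then (if ℓ ∈ T then (1:ℝ) else -1) else 0)) * Δ ℓ i i)
      = ∑ ℓ : Fin k, ∑ i : Fin k, (if ℓ = i then A else B) * Δ ℓ i i from
    Finset.sum_congr rfl (fun ℓ _ => Finset.sum_congr rfl (fun i _ => by rw [coeff]))]
  -- final rearrangement
  have final : ∀ ℓ ∈ (Finset.univ : Finset (Fin k)),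
      (∑ i : Fin k, (if ℓ = i then A else B) * Δ ℓ i i)
      = A * Δ ℓ ℓ ℓ + B * ∑ j : Fin k, (if j = ℓ then 0 else Δ ℓ j j) := by
    intro ℓ _
    have pt : ∀ i ∈ (Finset.univ : Finset (Fin k)), (if ℓ = i then A else B) * Δ ℓ i i
        = (if i = ℓ then A * Δ ℓ i i else 0) + B * (if i = ℓ then 0 else Δ ℓ i i) := by
      intro i _
      by_cases h : i = ℓ
      · subst h; simp
      · rw [if_neg h, if_neg h, if_neg (fun hh => h hh.symm)]; ring
    rw [Finset.sum_congr rfl pt, Finset.sum_add_distrib,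
      Finset.sum_ite_eq' Finset.univ ℓ, ← Finset.mul_sum]
    simp
  rw [Finset.sum_congr rfl final, Finset.sum_add_distrib, ← Finset.mul_sum, ← Finset.mul_sum]
end

section
/- Suppose C ∈ 𝔖_k and there exist a subset S° ⊆ S_k, positive reals (k_s)_{s∈S°}, and a neighborhood N of C in 𝔖_k such that every s ∈ S° satisfies g_s(C) = g_{S_k}(C), and for all C' ∈ N, Σ_{s∈S°} k_s·(g_s(C') − g_s(C)) = 0. Then C is a local minimizer of g_{S_k} over 𝔖_k; and since g_{S_k} is convex, C is a global minimizer. -/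
open Finset Filter

set_option maxHeartbeats 1000000 in
theorem stmt14 (k : ℕ) (hk : 0 < k) (C : Fin k → Matrix (Fin k) (Fin k) ℝ) (hC : inSk k C)
    (S0 : Finset (Finset (Fin k × Fin k))) (hS0 : S0.Nonempty)
    (hS0samp : ∀ s ∈ S0, IsSample s)
    (w : Finset (Fin k × Fin k) → ℝ) (hw : ∀ s ∈ S0, 0 < w s)
    (hmax : ∀ s ∈ S0, gSample s C = gMax k C)
    (hbal : ∃ ε > 0, ∀ C' : Fin k → Matrix (Fin k) (Fin k) ℝ, inSk k C' →
      (∀ ℓ i j, |C' ℓ i j - C ℓ i j| < ε) →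
      ∑ s ∈ S0, w s * (gSample s C' - gSample s C) = 0) :
    ∀ C' : Fin k → Matrix (Fin k) (Fin k) ℝ, inSk k C' → gMax k C ≤ gMax k C' := by
  intro C' hC'
  by_contra hlt
  push_neg at hlt
  obtain ⟨ε, hε, hbal⟩ := hbal
  set M : ℝ := ∑ ℓ : Fin k, ∑ i : Fin k, ∑ j : Fin k, |C' ℓ i j - C ℓ i j| with hM
  have hMnonneg : 0 ≤ M := Finset.sum_nonneg fun _ _ => Finset.sum_nonneg fun _ _ => Finset.sum_nonneg fun _ _ => abs_nonneg _
  set t : ℝ := min 1 (ε / (M + 1)) with ht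
  have ht0 : 0 < t := lt_min one_pos (div_pos hε (by linarith))
  have ht1 : t ≤ 1 := min_le_left _ _
  have htM : t ≤ ε / (M + 1) := min_le_right _ _
  set Ct : Fin k → Matrix (Fin k) (Fin k) ℝ :=
    fun ℓ i j => (1 - t) * C ℓ i j + t * C' ℓ i j with hCt
  have hCtin : inSk k Ct := by
    intro ℓ
    obtain ⟨h1, h2, h3⟩ := hC ℓ
    obtain ⟨h1', h2', h3'⟩ := hC' ℓ
    refine ⟨fun i hi => ?_, fun j hj => ?_, ?_⟩
    · simp only [hCt, Finset.sum_add_distrib, ← Finset.mul_sum, h1 i hi, h1' i hi]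
      ring
    · simp only [hCt, Finset.sum_add_distrib, ← Finset.mul_sum, h2 j hj, h2' j hj]
      ring
    · simp only [hCt, Finset.sum_add_distrib, ← Finset.mul_sum, h3, h3']
      ring
  have hclose : ∀ ℓ i j, |Ct ℓ i j - C ℓ i j| < ε := by
    intro ℓ i j
    have he : Ct ℓ i j - C ℓ i j = t * (C' ℓ i j - C ℓ i j) := by
      simp only [hCt]; ring
    rw [he, abs_mul, abs_of_pos ht0]
    have hle : |C' ℓ i j - C ℓ i j| ≤ M := by
      have hA : |C' ℓ i j - C ℓ i j| ≤ ∑ j' : Fin k, |C' ℓ i j' - C ℓ i j'| :=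
        Finset.single_le_sum (f := fun j' => |C' ℓ i j' - C ℓ i j'|)
          (fun _ _ => abs_nonneg _) (Finset.mem_univ j)
      have hB : (∑ j' : Fin k, |C' ℓ i j' - C ℓ i j'|)
          ≤ ∑ i' : Fin k, ∑ j' : Fin k, |C' ℓ i' j' - C ℓ i' j'| :=
        Finset.single_le_sum (f := fun i' => ∑ j' : Fin k, |C' ℓ i' j' - C ℓ i' j'|)
          (fun i' _ => Finset.sum_nonneg fun _ _ => abs_nonneg _) (Finset.mem_univ i)
      have hD : (∑ i' : Fin k, ∑ j' : Fin k, |C' ℓ i' j' - C ℓ i' j'|) ≤ M :=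
        Finset.single_le_sum
          (f := fun ℓ' => ∑ i' : Fin k, ∑ j' : Fin k, |C' ℓ' i' j' - C ℓ' i' j'|)
          (fun ℓ' _ => Finset.sum_nonneg fun _ _ =>
            Finset.sum_nonneg fun _ _ => abs_nonneg _) (Finset.mem_univ ℓ)
      linarith
    calc t * |C' ℓ i j - C ℓ i j| ≤ (ε / (M + 1)) * M := by
          apply mul_le_mul htM hle (abs_nonneg _)
          positivity
      _ < ε := by
          rw [div_mul_eq_mul_div, div_lt_iff₀ (by linarith)]
          nlinarith
  have hbdd : ∀ D : Fin k → Matrix (Fin k) (Fin k) ℝ, ∀ s ∈ S0, gSample s D ≤ gMax k D := by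
    intro D s hs
    exact le_ciSup (f := fun s : {s : Finset (Fin k × Fin k) // IsSample s} => gSample s.1 D)
      (Set.Finite.bddAbove (Set.finite_range _)) ⟨s, hS0samp s hs⟩
  have hkey : ∀ s ∈ S0, gSample s Ct - gSample s C ≤ t * (gMax k C' - gMax k C) := by
    intro s hs
    have hconv : gSample s Ct ≤ (1 - t) * gSample s C + t * gSample s C' := by
      unfold gSample gPart
      rw [Finset.mul_sum, Finset.mul_sum, ← Finset.sum_add_distrib]
      refine Finset.sum_le_sum fun ℓ _ => ?_
      have hsum : ∑ p ∈ s, Ct ℓ p.1 p.2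
          = (1 - t) * ∑ p ∈ s, C ℓ p.1 p.2 + t * ∑ p ∈ s, C' ℓ p.1 p.2 := by
        simp only [hCt, Finset.sum_add_distrib, Finset.mul_sum]
      rw [hsum]
      calc |(1 - t) * ∑ p ∈ s, C ℓ p.1 p.2 + t * ∑ p ∈ s, C' ℓ p.1 p.2|
          ≤ |(1 - t) * ∑ p ∈ s, C ℓ p.1 p.2| + |t * ∑ p ∈ s, C' ℓ p.1 p.2| := abs_add_le _ _
        _ = (1 - t) * |∑ p ∈ s, C ℓ p.1 p.2| + t * |∑ p ∈ s, C' ℓ p.1 p.2| := by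
            rw [abs_mul, abs_mul, abs_of_nonneg (by linarith), abs_of_pos ht0]
    have h1 : gSample s C = gMax k C := hmax s hs
    have h2 : gSample s C' ≤ gMax k C' := hbdd C' s hs
    nlinarith [ht0.le]
  have hzero : ∑ s ∈ S0, w s * (gSample s Ct - gSample s C) = 0 := hbal Ct hCtin hclose
  have hneg : ∑ s ∈ S0, w s * (gSample s Ct - gSample s C) < 0 := by
    calc ∑ s ∈ S0, w s * (gSample s Ct - gSample s C)
        ≤ ∑ s ∈ S0, w s * (t * (gMax k C' - gMax k C)) :=
          Finset.sum_le_sum fun s hs =>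
            mul_le_mul_of_nonneg_left (hkey s hs) (hw s hs).le
      _ < ∑ s ∈ S0, (0 : ℝ) :=
          Finset.sum_lt_sum_of_nonempty hS0 fun s hs =>
            mul_neg_of_pos_of_neg (hw s hs) (by nlinarith)
      _ = 0 := Finset.sum_const_zero
  exact absurd hzero (ne_of_lt hneg)
end

section
/- For k = 3, the element C**_3 ∈ 𝔖_3 given by the Sym(3)-invariant parametrization x = 12/22, a = 5/22, y = −3/22, b = −2/22 satisfies g_{S_3}(C**_3) = 12/11, attained exactly at the samples in S_3(2,2) ∪ S_3(3,3,0). Moreover 12/11 is the minimum of g_{S_3} over 𝔖_3. -/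
open Finset Filter

/-- the optimal point C**₃, parameters x = 12/22, y = −3/22, a = 5/22, b = −2/22 -/
noncomputable def Cstst3 : Fin 3 → Matrix (Fin 3) (Fin 3) ℝ :=
  Cfix 3 (12/22) (-3/22) (5/22) (-2/22)


/-- integer version (×22) of the entries of C**₃ -/
def cZ : Fin 3 → Fin 3 → Fin 3 → ℤ := fun ℓ i j =>
  if i = ℓ ∧ j = ℓ then 12
  else if i = j then -3
  else if i = ℓ ∨ j = ℓ then 5
  else -2

def zPart (s : Finset (Fin 3 × Fin 3)) (ℓ : Fin 3) : ℤ := ∑ p ∈ s, cZ ℓ p.1 p.2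

def zAbs (n : ℤ) : ℤ := if n < 0 then -n else n

def zS (s : Finset (Fin 3 × Fin 3)) : ℤ := ∑ ℓ : Fin 3, zAbs (zPart s ℓ)

instance {k : ℕ} (s : Finset (Fin k × Fin k)) : Decidable (IsSample s) := by
  unfold IsSample; infer_instance

lemma zAbs_cast (n : ℤ) : ((zAbs n : ℤ) : ℝ)/22 = |(n : ℝ)/22| := by
  unfold zAbs
  split_ifs with h
  · have hn : (n : ℝ) < 0 := by exact_mod_cast h
    rw [abs_of_neg (by linarith : (n : ℝ)/22 < 0)]
    push_cast
    ring
  · have hn : (0:ℝ) ≤ (n : ℝ) := by exact_mod_cast not_lt.1 h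
    rw [abs_of_nonneg (by linarith : (0:ℝ) ≤ (n : ℝ)/22)]

lemma hcast : ∀ ℓ i j, Cstst3 ℓ i j = ((cZ ℓ i j : ℤ) : ℝ)/22 := by
  intro ℓ i j
  fin_cases ℓ <;> fin_cases i <;> fin_cases j <;>
    norm_num [Cstst3, Cfix, cZ, Fin.ext_iff]

lemma part_cast (s : Finset (Fin 3 × Fin 3)) (ℓ : Fin 3) :
    gPart s Cstst3 ℓ = ((zPart s ℓ : ℤ) : ℝ)/22 := by
  unfold gPart zPart
  simp only [hcast]
  push_cast
  rw [Finset.sum_div]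

lemma gcast (s : Finset (Fin 3 × Fin 3)) : gSample s Cstst3 = ((zS s : ℤ) : ℝ)/22 := by
  simp only [gSample, part_cast, ← zAbs_cast, zS]
  push_cast
  rw [Finset.sum_div]

set_option maxRecDepth 100000 in
lemma zbound : ∀ s : Finset (Fin 3 × Fin 3), IsSample s → zS s ≤ 24 := by decide

set_option maxRecDepth 100000 in
lemma zchar : ∀ s : Finset (Fin 3 × Fin 3), IsSample s →
    (zS s = 24 ↔
      ((s.card = 2 ∧ beta s = 2) ∨ (s.card = 3 ∧ beta s = 3 ∧ gamma s = 0))) := by decide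

lemma zwitness : zS {((0,0) : Fin 3 × Fin 3), (1,1)} = 24 := by decide

lemma sample_witness : IsSample ({((0,0) : Fin 3 × Fin 3), (1,1)}) := by decide

instance : Nonempty {s : Finset (Fin 3 × Fin 3) // IsSample s} := ⟨⟨_, sample_witness⟩⟩

lemma key_le (C : Fin 3 → Matrix (Fin 3) (Fin 3) ℝ) :
    ∀ s : Finset (Fin 3 × Fin 3), IsSample s → gSample s C ≤ gMax 3 C := by
  intro s hs
  have hb : BddAbove (Set.range fun s : {s : Finset (Fin 3 × Fin 3) // IsSample s} =>
      gSample s.1 C) := Set.Finite.bddAbove (Set.finite_range _)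
  exact le_ciSup hb ⟨s, hs⟩

lemma gS2 (C : Fin 3 → Matrix (Fin 3) (Fin 3) ℝ) (i1 j1 i2 j2 : Fin 3)
    (h : ((i1,j1) : Fin 3 × Fin 3) ≠ (i2,j2)) :
    gSample {(i1,j1),(i2,j2)} C =
      |C 0 i1 j1 + C 0 i2 j2| + |C 1 i1 j1 + C 1 i2 j2| + |C 2 i1 j1 + C 2 i2 j2| := by
  unfold gSample gPart
  rw [Fin.sum_univ_three, Finset.sum_pair h, Finset.sum_pair h, Finset.sum_pair h]

lemma gS3 (C : Fin 3 → Matrix (Fin 3) (Fin 3) ℝ) (i1 j1 i2 j2 i3 j3 : Fin 3)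
    (h1 : ((i1,j1) : Fin 3 × Fin 3) ∉ ({(i2,j2),(i3,j3)} : Finset (Fin 3 × Fin 3)))
    (h2 : ((i2,j2) : Fin 3 × Fin 3) ≠ (i3,j3)) :
    gSample {(i1,j1),(i2,j2),(i3,j3)} C =
      |C 0 i1 j1 + (C 0 i2 j2 + C 0 i3 j3)| + |C 1 i1 j1 + (C 1 i2 j2 + C 1 i3 j3)| +
      |C 2 i1 j1 + (C 2 i2 j2 + C 2 i3 j3)| := by
  unfold gSample gPart
  rw [Fin.sum_univ_three, Finset.sum_insert h1, Finset.sum_insert h1, Finset.sum_insert h1,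
    Finset.sum_pair h2, Finset.sum_pair h2, Finset.sum_pair h2]

lemma lower_bound (C : Fin 3 → Matrix (Fin 3) (Fin 3) ℝ) (hC : inSk 3 C) :
    12/11 ≤ gMax 3 C := by
  have key := key_le C
  have B0 : (C 0 0 0 + C 0 1 1) + (C 1 0 0 + C 1 1 1) + (-(C 2 0 0 + C 2 1 1)) ≤ gMax 3 C := by
    have h := key {((0,0) : Fin 3 × Fin 3), (1,1)} (by decide)
    rw [gS2 C 0 0 1 1 (by decide)] at h
    linarith [le_abs_self (C 0 0 0 + C 0 1 1), le_abs_self (C 1 0 0 + C 1 1 1), neg_abs_le (C 2 0 0 + C 2 1 1)]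
  have B1 : (C 0 0 0 + C 0 2 2) + (-(C 1 0 0 + C 1 2 2)) + (C 2 0 0 + C 2 2 2) ≤ gMax 3 C := by
    have h := key {((0,0) : Fin 3 × Fin 3), (2,2)} (by decide)
    rw [gS2 C 0 0 2 2 (by decide)] at h
    linarith [le_abs_self (C 0 0 0 + C 0 2 2), neg_abs_le (C 1 0 0 + C 1 2 2), le_abs_self (C 2 0 0 + C 2 2 2)]
  have B2 : (-(C 0 1 1 + C 0 2 2)) + (C 1 1 1 + C 1 2 2) + (C 2 1 1 + C 2 2 2) ≤ gMax 3 C := by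
    have h := key {((1,1) : Fin 3 × Fin 3), (2,2)} (by decide)
    rw [gS2 C 1 1 2 2 (by decide)] at h
    linarith [neg_abs_le (C 0 1 1 + C 0 2 2), le_abs_self (C 1 1 1 + C 1 2 2), le_abs_self (C 2 1 1 + C 2 2 2)]
  have B3 : (C 0 0 0 + C 0 0 1) + (C 1 0 0 + C 1 0 1) + (-(C 2 0 0 + C 2 0 1)) ≤ gMax 3 C := by
    have h := key {((0,0) : Fin 3 × Fin 3), (0,1)} (by decide)
    rw [gS2 C 0 0 0 1 (by decide)] at h
    linarith [le_abs_self (C 0 0 0 + C 0 0 1), le_abs_self (C 1 0 0 + C 1 0 1), neg_abs_le (C 2 0 0 + C 2 0 1)]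
  have B4 : (C 0 0 0 + C 0 0 2) + (-(C 1 0 0 + C 1 0 2)) + (C 2 0 0 + C 2 0 2) ≤ gMax 3 C := by
    have h := key {((0,0) : Fin 3 × Fin 3), (0,2)} (by decide)
    rw [gS2 C 0 0 0 2 (by decide)] at h
    linarith [le_abs_self (C 0 0 0 + C 0 0 2), neg_abs_le (C 1 0 0 + C 1 0 2), le_abs_self (C 2 0 0 + C 2 0 2)]
  have B5 : (C 0 1 0 + C 0 1 1) + (C 1 1 0 + C 1 1 1) + (-(C 2 1 0 + C 2 1 1)) ≤ gMax 3 C := by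
    have h := key {((1,0) : Fin 3 × Fin 3), (1,1)} (by decide)
    rw [gS2 C 1 0 1 1 (by decide)] at h
    linarith [le_abs_self (C 0 1 0 + C 0 1 1), le_abs_self (C 1 1 0 + C 1 1 1), neg_abs_le (C 2 1 0 + C 2 1 1)]
  have B6 : (-(C 0 1 1 + C 0 1 2)) + (C 1 1 1 + C 1 1 2) + (C 2 1 1 + C 2 1 2) ≤ gMax 3 C := by
    have h := key {((1,1) : Fin 3 × Fin 3), (1,2)} (by decide)
    rw [gS2 C 1 1 1 2 (by decide)] at h
    linarith [neg_abs_le (C 0 1 1 + C 0 1 2), le_abs_self (C 1 1 1 + C 1 1 2), le_abs_self (C 2 1 1 + C 2 1 2)]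
  have B7 : (C 0 2 0 + C 0 2 2) + (-(C 1 2 0 + C 1 2 2)) + (C 2 2 0 + C 2 2 2) ≤ gMax 3 C := by
    have h := key {((2,0) : Fin 3 × Fin 3), (2,2)} (by decide)
    rw [gS2 C 2 0 2 2 (by decide)] at h
    linarith [le_abs_self (C 0 2 0 + C 0 2 2), neg_abs_le (C 1 2 0 + C 1 2 2), le_abs_self (C 2 2 0 + C 2 2 2)]
  have B8 : (-(C 0 2 1 + C 0 2 2)) + (C 1 2 1 + C 1 2 2) + (C 2 2 1 + C 2 2 2) ≤ gMax 3 C := by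
    have h := key {((2,1) : Fin 3 × Fin 3), (2,2)} (by decide)
    rw [gS2 C 2 1 2 2 (by decide)] at h
    linarith [neg_abs_le (C 0 2 1 + C 0 2 2), le_abs_self (C 1 2 1 + C 1 2 2), le_abs_self (C 2 2 1 + C 2 2 2)]
  have B9 : (C 0 0 1 + C 0 1 2 + C 0 2 0) + (C 1 0 1 + C 1 1 2 + C 1 2 0) + (C 2 0 1 + C 2 1 2 + C 2 2 0) ≤ gMax 3 C := by
    have h := key {((0,1) : Fin 3 × Fin 3), (1,2), (2,0)} (by decide)
    rw [gS3 C 0 1 1 2 2 0 (by decide) (by decide)] at h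
    linarith [le_abs_self (C 0 0 1 + (C 0 1 2 + C 0 2 0)), le_abs_self (C 1 0 1 + (C 1 1 2 + C 1 2 0)), le_abs_self (C 2 0 1 + (C 2 1 2 + C 2 2 0))]
  have B10 : (C 0 0 2 + C 0 1 0 + C 0 2 1) + (C 1 0 2 + C 1 1 0 + C 1 2 1) + (C 2 0 2 + C 2 1 0 + C 2 2 1) ≤ gMax 3 C := by
    have h := key {((0,2) : Fin 3 × Fin 3), (1,0), (2,1)} (by decide)
    rw [gS3 C 0 2 1 0 2 1 (by decide) (by decide)] at h
    linarith [le_abs_self (C 0 0 2 + (C 0 1 0 + C 0 2 1)), le_abs_self (C 1 0 2 + (C 1 1 0 + C 1 2 1)), le_abs_self (C 2 0 2 + (C 2 1 0 + C 2 2 1))]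
  have hr01 : C 0 1 0 + C 0 1 1 + C 0 1 2 = 0 := by
    have := (hC 0).1 1 (by decide); rwa [Fin.sum_univ_three] at this
  have hr02 : C 0 2 0 + C 0 2 1 + C 0 2 2 = 0 := by
    have := (hC 0).1 2 (by decide); rwa [Fin.sum_univ_three] at this
  have hc01 : C 0 0 1 + C 0 1 1 + C 0 2 1 = 0 := by
    have := (hC 0).2.1 1 (by decide); rwa [Fin.sum_univ_three] at this
  have hc02 : C 0 0 2 + C 0 1 2 + C 0 2 2 = 0 := by
    have := (hC 0).2.1 2 (by decide); rwa [Fin.sum_univ_three] at this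
  have ht0 : (C 0 0 0 + C 0 0 1 + C 0 0 2) + (C 0 1 0 + C 0 1 1 + C 0 1 2) + (C 0 2 0 + C 0 2 1 + C 0 2 2) = 1 := by
    have := (hC 0).2.2; simp only [Fin.sum_univ_three] at this; linarith
  have hr10 : C 1 0 0 + C 1 0 1 + C 1 0 2 = 0 := by
    have := (hC 1).1 0 (by decide); rwa [Fin.sum_univ_three] at this
  have hr12 : C 1 2 0 + C 1 2 1 + C 1 2 2 = 0 := by
    have := (hC 1).1 2 (by decide); rwa [Fin.sum_univ_three] at this
  have hc10 : C 1 0 0 + C 1 1 0 + C 1 2 0 = 0 := by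
    have := (hC 1).2.1 0 (by decide); rwa [Fin.sum_univ_three] at this
  have hc12 : C 1 0 2 + C 1 1 2 + C 1 2 2 = 0 := by
    have := (hC 1).2.1 2 (by decide); rwa [Fin.sum_univ_three] at this
  have ht1 : (C 1 0 0 + C 1 0 1 + C 1 0 2) + (C 1 1 0 + C 1 1 1 + C 1 1 2) + (C 1 2 0 + C 1 2 1 + C 1 2 2) = 1 := by
    have := (hC 1).2.2; simp only [Fin.sum_univ_three] at this; linarith
  have hr20 : C 2 0 0 + C 2 0 1 + C 2 0 2 = 0 := by
    have := (hC 2).1 0 (by decide); rwa [Fin.sum_univ_three] at this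
  have hr21 : C 2 1 0 + C 2 1 1 + C 2 1 2 = 0 := by
    have := (hC 2).1 1 (by decide); rwa [Fin.sum_univ_three] at this
  have hc20 : C 2 0 0 + C 2 1 0 + C 2 2 0 = 0 := by
    have := (hC 2).2.1 0 (by decide); rwa [Fin.sum_univ_three] at this
  have hc21 : C 2 0 1 + C 2 1 1 + C 2 2 1 = 0 := by
    have := (hC 2).2.1 1 (by decide); rwa [Fin.sum_univ_three] at this
  have ht2 : (C 2 0 0 + C 2 0 1 + C 2 0 2) + (C 2 1 0 + C 2 1 1 + C 2 1 2) + (C 2 2 0 + C 2 2 1 + C 2 2 2) = 1 := by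
    have := (hC 2).2.2; simp only [Fin.sum_univ_three] at this; linarith
  linarith [B0, B1, B2, B3, B4, B5, B6, B7, B8, B9, B10, hr01, hr02, hc01, hc02, ht0, hr10, hr12, hc10, hc12, ht1, hr20, hr21, hc20, hc21, ht2]

theorem stmt15 :
    inSk 3 Cstst3 ∧
    gMax 3 Cstst3 = 12/11 ∧
    (∀ s : Finset (Fin 3 × Fin 3), IsSample s →
      (gSample s Cstst3 = 12/11 ↔
        ((s.card = 2 ∧ beta s = 2) ∨ (s.card = 3 ∧ beta s = 3 ∧ gamma s = 0)))) ∧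
    (∀ C : Fin 3 → Matrix (Fin 3) (Fin 3) ℝ, inSk 3 C → 12/11 ≤ gMax 3 C) := by
  have hin : inSk 3 Cstst3 := by
    intro ℓ
    refine ⟨fun i hi => ?_, fun j hj => ?_, ?_⟩
    · have e : (∑ j, Cstst3 ℓ i j) = ((∑ j, cZ ℓ i j : ℤ) : ℝ)/22 := by
        simp only [hcast]; push_cast; rw [Finset.sum_div]
      rw [e, show (∑ j, cZ ℓ i j) = 0 from by revert hi; fin_cases ℓ <;> fin_cases i <;> decide]
      norm_num
    · have e : (∑ i, Cstst3 ℓ i j) = ((∑ i, cZ ℓ i j : ℤ) : ℝ)/22 := by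
        simp only [hcast]; push_cast; rw [Finset.sum_div]
      rw [e, show (∑ i, cZ ℓ i j) = 0 from by revert hj; fin_cases ℓ <;> fin_cases j <;> decide]
      norm_num
    · have e : (∑ i, ∑ j, Cstst3 ℓ i j) = ((∑ i, ∑ j, cZ ℓ i j : ℤ) : ℝ)/22 := by
        simp only [hcast]; push_cast; simp only [← Finset.sum_div]
      rw [e, show (∑ i, ∑ j, cZ ℓ i j) = 22 from by fin_cases ℓ <;> decide]
      norm_num
  refine ⟨hin, ?_, ?_, fun C hC => lower_bound C hC⟩
  · apply le_antisymm
    · apply ciSup_le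
      rintro ⟨s, hs⟩
      rw [gcast]
      have h : (zS s : ℝ) ≤ 24 := by exact_mod_cast zbound s hs
      linarith
    · have h := key_le Cstst3 _ sample_witness
      rw [gcast, zwitness] at h
      calc (12/11 : ℝ) = ((24:ℤ) : ℝ)/22 := by norm_num
        _ ≤ _ := h
  · intro s hs
    rw [gcast]
    have equiv : ((zS s : ℝ)/22 = 12/11) ↔ zS s = 24 := by
      constructor
      · intro h
        have : (zS s : ℝ) = 24 := by linarith
        exact_mod_cast this
      · intro h
        rw [h]; norm_num
    rw [equiv]
    exact zchar s hs
end
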